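/- arXiv:2304.01303 — 2 statements merged into one kernel-verified Lean document; each statement's English description precedes it below -/
import Mathlib

section
/- There is an absolute constant C > 0 with the following property. Let L ≥ 1 and m ≥ 1 be integers and fix k* ∈ {1,…,m}. For every ordered pair (τ, τ̃) of states in {1,…,m}^{L+1}, the number of triples (λ, i, k) with λ ∈ {1,…,m}^{L+1}, i ∈ {0,…,L}, k ∈ {1,…,m} such that (τ, τ̃) occurs as a consecutive pair of distinct states on the path γ_{λ,i,k} is at most C · m² · (L+1)^{1 + log₂ 3}. -/
/-- The recursively defined sequence `Swap(i,j)` of transpositions of coordinate indices: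
if `j − i ≤ 1` it is the single transposition `(i,j)`; otherwise, with `h = ⌊(i+j)/2⌋`,
it is `Swap(i,h) ++ Swap(h,j) ++ Swap(i,h)`. -/
def swapSeq (i j : ℕ) : List (ℕ × ℕ) :=
  if j ≤ i + 1 then [(i, j)]
  else swapSeq i ((i + j) / 2) ++ swapSeq ((i + j) / 2) j ++ swapSeq i ((i + j) / 2)
termination_by j - i
decreasing_by all_goals omega

/-- `Swap(0, i)`, with no moves if `i = 0`. -/
def swapSeq0 (i : ℕ) : List (ℕ × ℕ) := if i = 0 then [] else swapSeq 0 i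

/-- Applying a transposition `(a, b)` of coordinate indices to a state: the coordinates
`a` and `b` are exchanged. -/
def applyT {L m : ℕ} (σ : Fin (L + 1) → Fin m) (t : ℕ × ℕ) : Fin (L + 1) → Fin m :=
  if h : t.1 < L + 1 ∧ t.2 < L + 1 then σ ∘ Equiv.swap ⟨t.1, h.1⟩ ⟨t.2, h.2⟩ else σ

/-- The path `γ_{λ,i,k}`: the sequence of states visited by successively
(1) setting coordinate 0 to `k*`; (2) applying the transpositions of `Swap(0,i)` in order;
(3) setting coordinate 0 to `k`; (4) applying `Swap(0,i)` again; (5) setting coordinate 0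
back to `λ₀`.  It starts at `λ` and ends at `λ_{[i,k]}`. -/
def gammaPath {L m : ℕ} (lam : Fin (L + 1) → Fin m) (i : ℕ) (k kstar : Fin m) :
    List (Fin (L + 1) → Fin m) :=
  List.scanl (fun σ mv => mv σ) lam
    ([fun σ : Fin (L + 1) → Fin m => Function.update σ 0 kstar] ++
      (swapSeq0 i).map (fun t (σ : Fin (L + 1) → Fin m) => applyT σ t) ++
      [fun σ : Fin (L + 1) → Fin m => Function.update σ 0 k] ++
      (swapSeq0 i).map (fun t (σ : Fin (L + 1) → Fin m) => applyT σ t) ++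
      [fun σ : Fin (L + 1) → Fin m => Function.update σ 0 (lam 0)])

lemma applyT_injective {L m : ℕ} (t : ℕ × ℕ) :
    Function.Injective (fun σ : Fin (L + 1) → Fin m => applyT σ t) := by
  intro a b hab
  simp only [applyT] at hab
  split_ifs at hab with hc
  · funext x
    have := congrFun hab ((Equiv.swap (⟨t.1, hc.1⟩ : Fin (L+1)) ⟨t.2, hc.2⟩).symm x)
    simpa using this
  · exact hab

lemma foldl_applyT_injective {L m : ℕ} (ts : List (ℕ × ℕ)) :
    Function.Injective (fun σ : Fin (L + 1) → Fin m => List.foldl applyT σ ts) := by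
  induction ts with
  | nil => exact fun a b h => h
  | cons t ts ih =>
    intro a b h
    simp only [List.foldl_cons] at h
    exact applyT_injective t (ih h)

lemma swapSeq_length_le (i j : ℕ) (hij : i < j) :
    (swapSeq i j).length ≤ 3 ^ Nat.clog 2 (j - i) := by
  rw [swapSeq]
  split_ifs with hb
  · simpa using Nat.one_le_pow _ _ (by norm_num)
  · have h1 : i < (i + j) / 2 := by omega
    have h2 : (i + j) / 2 < j := by omega
    have ih1 := swapSeq_length_le i ((i + j) / 2) h1
    have ih2 := swapSeq_length_le ((i + j) / 2) j h2
    have e1 : (i + j) / 2 - i = (j - i) / 2 := by omega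
    have e2 : j - (i + j) / 2 = (j - i + 1) / 2 := by omega
    have hrec : Nat.clog 2 (j - i) = Nat.clog 2 ((j - i + 1) / 2) + 1 :=
      Nat.clog_of_two_le (by norm_num) (by omega)
    have hmono : Nat.clog 2 ((j - i) / 2) ≤ Nat.clog 2 ((j - i + 1) / 2) :=
      Nat.clog_mono_right _ (by omega)
    have b1 : (swapSeq i ((i + j) / 2)).length ≤ 3 ^ Nat.clog 2 ((j - i + 1) / 2) := by
      calc (swapSeq i ((i + j) / 2)).length ≤ 3 ^ Nat.clog 2 ((i + j) / 2 - i) := ih1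
        _ ≤ 3 ^ Nat.clog 2 ((j - i + 1) / 2) := by
            rw [e1]; exact Nat.pow_le_pow_right (by norm_num) hmono
    have b2 : (swapSeq ((i + j) / 2) j).length ≤ 3 ^ Nat.clog 2 ((j - i + 1) / 2) := by
      rw [e2] at ih2; exact ih2
    simp only [List.length_append]
    rw [hrec, pow_succ]
    omega
termination_by j - i

lemma foldl_swapSeq {L m : ℕ} (i j : ℕ) (hij : i < j) (hj : j < L + 1)
    (σ : Fin (L + 1) → Fin m) :
    List.foldl applyT σ (swapSeq i j) =
      σ ∘ (Equiv.swap (⟨i, by omega⟩ : Fin (L + 1)) ⟨j, hj⟩) := by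
  rw [swapSeq]
  split_ifs with hb
  · simp only [List.foldl_cons, List.foldl_nil, applyT]
    rw [dif_pos (⟨by omega, hj⟩ : i < L + 1 ∧ j < L + 1)]
  · have h1 : i < (i + j) / 2 := by omega
    have h2 : (i + j) / 2 < j := by omega
    have hhL : (i + j) / 2 < L + 1 := by omega
    rw [List.foldl_append, List.foldl_append,
      foldl_swapSeq i ((i + j) / 2) h1 hhL,
      foldl_swapSeq ((i + j) / 2) j h2 hj,
      foldl_swapSeq i ((i + j) / 2) h1 hhL]
    have hne1 : (⟨j, hj⟩ : Fin (L + 1)) ≠ ⟨(i + j) / 2, hhL⟩ := by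
      simp [Fin.ext_iff]; omega
    have hne2 : (⟨j, hj⟩ : Fin (L + 1)) ≠ ⟨i, by omega⟩ := by
      simp [Fin.ext_iff]; omega
    have key : Equiv.swap (⟨i, by omega⟩ : Fin (L + 1)) ⟨(i + j) / 2, hhL⟩ *
        Equiv.swap (⟨(i + j) / 2, hhL⟩ : Fin (L + 1)) ⟨j, hj⟩ *
        Equiv.swap (⟨i, by omega⟩ : Fin (L + 1)) ⟨(i + j) / 2, hhL⟩ =
        Equiv.swap (⟨i, by omega⟩ : Fin (L + 1)) ⟨j, hj⟩ := by
      rw [Equiv.swap_comm (⟨i, by omega⟩ : Fin (L + 1)) ⟨(i + j) / 2, hhL⟩,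
        Equiv.swap_comm (⟨(i + j) / 2, hhL⟩ : Fin (L + 1)) ⟨j, hj⟩]
      exact Equiv.swap_mul_swap_mul_swap hne1 hne2
    funext x
    simp only [Function.comp_apply]
    rw [← key]
    simp [Equiv.Perm.mul_apply]
termination_by j - i

lemma get?_scanl_eq {α β : Type*} (f : β → α → β) :
    ∀ (l : List α) (b : β) (n : ℕ), n ≤ l.length →
      (List.scanl f b l)[n]? = some (List.foldl f b (l.take n)) := by
  intro l
  induction l with
  | nil =>
    intro b n h
    have : n = 0 := by simpa using h
    subst this
    simp
  | cons a l ih =>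
    intro b n h
    cases n with
    | zero => simp
    | succ n =>
      rw [List.scanl_cons]
      simpa using ih (f b a) n (by simpa using h)


section
variable {L m : ℕ}

def mvList (lam : Fin (L + 1) → Fin m) (i : ℕ) (k kstar : Fin m) :
    List ((Fin (L + 1) → Fin m) → (Fin (L + 1) → Fin m)) :=
  [fun σ : Fin (L + 1) → Fin m => Function.update σ 0 kstar] ++
    (swapSeq0 i).map (fun t (σ : Fin (L + 1) → Fin m) => applyT σ t) ++
    [fun σ : Fin (L + 1) → Fin m => Function.update σ 0 k] ++
    (swapSeq0 i).map (fun t (σ : Fin (L + 1) → Fin m) => applyT σ t) ++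
    [fun σ : Fin (L + 1) → Fin m => Function.update σ 0 (lam 0)]

lemma gammaPath_eq (lam : Fin (L + 1) → Fin m) (i : ℕ) (k kstar : Fin m) :
    gammaPath lam i k kstar = List.scanl (fun σ mv => mv σ) lam (mvList lam i k kstar) := rfl

lemma mvList_eq (lam : Fin (L + 1) → Fin m) (i : ℕ) (k kstar : Fin m) :
    mvList lam i k kstar = (fun σ : Fin (L + 1) → Fin m => Function.update σ 0 kstar) ::
      ((swapSeq0 i).map (fun t (σ : Fin (L + 1) → Fin m) => applyT σ t) ++
        ((fun σ : Fin (L + 1) → Fin m => Function.update σ 0 k) ::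
        ((swapSeq0 i).map (fun t (σ : Fin (L + 1) → Fin m) => applyT σ t) ++
          [fun σ : Fin (L + 1) → Fin m => Function.update σ 0 (lam 0)]))) := by
  simp [mvList]

lemma length_mvList (lam : Fin (L + 1) → Fin m) (i : ℕ) (k kstar : Fin m) :
    (mvList lam i k kstar).length = 2 * (swapSeq0 i).length + 3 := by
  rw [mvList_eq]
  simp
  omega

lemma foldl_map_applyT (ts : List (ℕ × ℕ)) (σ : Fin (L + 1) → Fin m) :
    List.foldl (fun σ mv => mv σ) σ
      (ts.map (fun t (σ : Fin (L + 1) → Fin m) => applyT σ t)) =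
    List.foldl applyT σ ts := by
  rw [List.foldl_map]

lemma state_early (lam : Fin (L + 1) → Fin m) (i : ℕ) (k kstar : Fin m) (q : ℕ)
    (hq : q ≤ (swapSeq0 i).length) :
    List.foldl (fun σ mv => mv σ) lam ((mvList lam i k kstar).take (q + 1)) =
      List.foldl applyT (Function.update lam 0 kstar) ((swapSeq0 i).take q) := by
  rw [mvList_eq, List.take_succ_cons, List.take_append]
  have h0 : q - ((swapSeq0 i).map
      (fun t (σ : Fin (L + 1) → Fin m) => applyT σ t)).length = 0 := by
    simp only [List.length_map]; omega
  rw [h0, List.take_zero, List.append_nil, List.foldl_cons, ← List.map_take, foldl_map_applyT]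

lemma state_mid (lam : Fin (L + 1) → Fin m) (i : ℕ) (k kstar : Fin m) (q : ℕ)
    (hq : q ≤ (swapSeq0 i).length) :
    List.foldl (fun σ mv => mv σ) lam
        ((mvList lam i k kstar).take ((swapSeq0 i).length + 2 + q)) =
      List.foldl applyT
        (Function.update (List.foldl applyT (Function.update lam 0 kstar) (swapSeq0 i)) 0 k)
        ((swapSeq0 i).take q) := by
  have e : (mvList lam i k kstar).take ((swapSeq0 i).length + 2 + q) =
      (fun σ : Fin (L + 1) → Fin m => Function.update σ 0 kstar) ::
        ((swapSeq0 i).map (fun t (σ : Fin (L + 1) → Fin m) => applyT σ t) ++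
          ((fun σ : Fin (L + 1) → Fin m => Function.update σ 0 k) ::
            ((swapSeq0 i).take q).map (fun t (σ : Fin (L + 1) → Fin m) => applyT σ t))) := by
    rw [mvList_eq]
    rw [show (swapSeq0 i).length + 2 + q = ((swapSeq0 i).length + 1 + q) + 1 by ring,
      List.take_succ_cons, List.take_append,
      List.take_of_length_le (by simp; omega)]
    have h1 : (swapSeq0 i).length + 1 + q -
        ((swapSeq0 i).map (fun t (σ : Fin (L + 1) → Fin m) => applyT σ t)).length = q + 1 := by
      simp only [List.length_map]; omega
    rw [h1, List.take_succ_cons, List.take_append]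
    have h2 : q - ((swapSeq0 i).map
        (fun t (σ : Fin (L + 1) → Fin m) => applyT σ t)).length = 0 := by
      simp only [List.length_map]; omega
    rw [h2, List.take_zero, List.append_nil, ← List.map_take]
  rw [e]
  simp only [List.foldl_cons, List.foldl_append, foldl_map_applyT]

lemma state_last (lam : Fin (L + 1) → Fin m) (i : ℕ) (k kstar : Fin m) :
    List.foldl (fun σ mv => mv σ) lam
        ((mvList lam i k kstar).take (2 * (swapSeq0 i).length + 3)) =
      Function.update
        (List.foldl applyT
          (Function.update (List.foldl applyT (Function.update lam 0 kstar) (swapSeq0 i)) 0 k)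
          (swapSeq0 i)) 0 (lam 0) := by
  rw [← length_mvList lam i k kstar, List.take_length, mvList_eq]
  simp only [List.foldl_cons, List.foldl_append, foldl_map_applyT, List.foldl_nil]

lemma gammaPath_get?_eq (lam : Fin (L + 1) → Fin m) (i : ℕ) (k kstar : Fin m) (p : ℕ)
    (τ : Fin (L + 1) → Fin m) (h : (gammaPath lam i k kstar)[p]? = some τ) :
    p ≤ 2 * (swapSeq0 i).length + 3 ∧
      List.foldl (fun σ mv => mv σ) lam ((mvList lam i k kstar).take p) = τ := by
  have hlen : p < (gammaPath lam i k kstar).length := by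
    by_contra hc
    rw [List.getElem?_eq_none (by omega)] at h
    exact absurd h (by simp)
  rw [gammaPath_eq, List.length_scanl, length_mvList] at hlen
  have hple : p ≤ (mvList lam i k kstar).length := by rw [length_mvList]; omega
  have := get?_scanl_eq (fun σ mv => mv σ) (mvList lam i k kstar) lam p hple
  rw [gammaPath_eq] at h
  rw [this] at h
  exact ⟨by omega, Option.some_inj.mp h⟩

lemma update_cancel {lam lam' : Fin (L + 1) → Fin m} {c c' : Fin m}
    (h : Function.update lam 0 c = Function.update lam' 0 c') (h0 : lam 0 = lam' 0) :
    lam = lam' := by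
  funext z
  by_cases hz : z = 0
  · subst hz; exact h0
  · have := congrFun h z
    simpa [Function.update_of_ne hz] using this

lemma fiber_bound (kstar : Fin m) (τ : Fin (L + 1) → Fin m) (i : Fin (L + 1)) (p : ℕ) :
    (Finset.univ.filter (fun x : (Fin (L + 1) → Fin m) × Fin (L + 1) × Fin m =>
        x.2.1 = i ∧ (gammaPath x.1 (i : ℕ) x.2.2 kstar)[p]? = some τ)).card ≤ m ^ 2 := by
  classical
  set s := (swapSeq0 (i : ℕ)).length with hs
  have hcard : ((Finset.univ : Finset (Fin m × Fin m))).card = m ^ 2 := by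
    simp [sq]
  rw [← hcard]
  apply Finset.card_le_card_of_injOn
    (fun x => ((x.1 0, if (i : ℕ) = 0 ∨ p ≤ s + 1 then x.2.2 else x.1 i) : Fin m × Fin m))
    (fun _ _ => Finset.mem_univ _)
  intro x hx y hy hkey
  simp only [Prod.mk.injEq] at hkey
  obtain ⟨hk0, hkif⟩ := hkey
  simp only [Finset.mem_coe, Finset.mem_filter, Finset.mem_univ, true_and] at hx hy
  obtain ⟨hxi, hxg⟩ := hx
  obtain ⟨hyi, hyg⟩ := hy
  obtain ⟨hple, hxs⟩ := gammaPath_get?_eq x.1 (i : ℕ) x.2.2 kstar p τ hxg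
  obtain ⟨-, hys⟩ := gammaPath_get?_eq y.1 (i : ℕ) y.2.2 kstar p τ hyg
  have hstate := hxs.trans hys.symm
  rw [← hs] at hple
  -- final assembly helper
  have assemble : x.1 = y.1 → x.2.2 = y.2.2 → x = y := by
    intro h1 h2
    have h3 : x.2.1 = y.2.1 := by rw [hxi, hyi]
    exact Prod.ext h1 (Prod.ext h3 h2)
  by_cases hi0 : (i : ℕ) = 0
  · -- case i = 0
    have hsw : swapSeq0 (i : ℕ) = [] := by simp [swapSeq0, hi0]
    have hs0 : s = 0 := by rw [hs, hsw]; rfl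
    simp only [if_pos (Or.inl hi0 : (i:ℕ) = 0 ∨ p ≤ s + 1)] at hkif
    have hk2 := hkif
    have hmv : ∀ (lam : Fin (L + 1) → Fin m) (k : Fin m),
        mvList lam (i : ℕ) k kstar =
          [fun σ : Fin (L + 1) → Fin m => Function.update σ 0 kstar,
           fun σ : Fin (L + 1) → Fin m => Function.update σ 0 k,
           fun σ : Fin (L + 1) → Fin m => Function.update σ 0 (lam 0)] := by
      intro lam k; rw [mvList_eq, hsw]; simp
    rw [hmv] at hstate
    rw [hmv] at hstate
    rw [hs0] at hple
    interval_cases p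
    · simp only [List.take_zero, List.foldl_nil] at hstate
      exact assemble hstate hk2
    · simp only [List.take_succ_cons, List.take_zero, List.foldl_cons, List.foldl_nil]
        at hstate
      exact assemble (update_cancel hstate hk0) hk2
    · simp only [List.take_succ_cons, List.take_zero, List.foldl_cons, List.foldl_nil,
        Function.update_idem] at hstate
      exact assemble (update_cancel hstate hk0) hk2
    · simp only [List.take_succ_cons, List.take_zero, List.foldl_cons, List.foldl_nil,
        Function.update_idem, Function.update_eq_self] at hstate
      exact assemble hstate hk2
  · -- case i ≥ 1
    have hi1 : 1 ≤ (i : ℕ) := Nat.pos_of_ne_zero hi0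
    have hiL : (i : ℕ) < L + 1 := i.isLt
    have hi_ne : i ≠ (0 : Fin (L + 1)) := by
      simp only [ne_eq, Fin.ext_iff, Fin.val_zero]; exact hi0
    have hsw : swapSeq0 (i : ℕ) = swapSeq 0 (i : ℕ) := by simp [swapSeq0, hi0]
    have hfull : ∀ σ : Fin (L + 1) → Fin m,
        List.foldl applyT σ (swapSeq0 (i : ℕ)) = σ ∘ (Equiv.swap (0 : Fin (L + 1)) i) := by
      intro σ
      rw [hsw, foldl_swapSeq 0 (i : ℕ) hi1 hiL σ]
      simp only [Fin.mk_zero, Fin.eta]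
    have hmu0 : ∀ lam : Fin (L + 1) → Fin m,
        (List.foldl applyT (Function.update lam 0 kstar) (swapSeq0 (i : ℕ))) 0 = lam i := by
      intro lam
      rw [hfull]
      simp only [Function.comp_apply, Equiv.swap_apply_left]
      exact Function.update_of_ne hi_ne _ _
    have hinv : ∀ σ : Fin (L + 1) → Fin m,
        Function.update σ 0 kstar =
          (List.foldl applyT (Function.update σ 0 kstar) (swapSeq0 (i : ℕ))) ∘
            (Equiv.swap (0 : Fin (L + 1)) i) := by
      intro σ
      rw [hfull]
      funext z
      rw [Function.comp_apply, Function.comp_apply, Equiv.swap_apply_self]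
    by_cases hp1 : p ≤ s + 1
    · -- early regime
      simp only [if_pos (Or.inr hp1 : (i:ℕ) = 0 ∨ p ≤ s + 1)] at hkif
      have hk2 := hkif
      rcases Nat.eq_zero_or_pos p with hp0 | hppos
      · subst hp0
        simp only [List.take_zero, List.foldl_nil] at hstate
        exact assemble hstate hk2
      · obtain ⟨q, rfl⟩ : ∃ q, p = q + 1 := ⟨p - 1, by omega⟩
        have hq : q ≤ s := by omega
        rw [state_early x.1 (i : ℕ) x.2.2 kstar q hq,
          state_early y.1 (i : ℕ) y.2.2 kstar q hq] at hstate
        have := foldl_applyT_injective ((swapSeq0 (i : ℕ)).take q) hstate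
        exact assemble (update_cancel this hk0) hk2
    · -- late regime
      simp only [if_neg (by push_neg; exact ⟨hi0, by omega⟩ :
        ¬((i:ℕ) = 0 ∨ p ≤ s + 1))] at hkif
      have hki := hkif
      -- common recovery from ν_x = ν_y
      have recover : ∀ (hnu : Function.update
            (List.foldl applyT (Function.update x.1 0 kstar) (swapSeq0 (i : ℕ))) 0 x.2.2 =
          Function.update
            (List.foldl applyT (Function.update y.1 0 kstar) (swapSeq0 (i : ℕ))) 0 y.2.2),
          x = y := by
        intro hnu
        have hk : x.2.2 = y.2.2 := by
          have := congrFun hnu 0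
          simpa using this
        have hmu : List.foldl applyT (Function.update x.1 0 kstar) (swapSeq0 (i : ℕ)) =
            List.foldl applyT (Function.update y.1 0 kstar) (swapSeq0 (i : ℕ)) := by
          funext z
          by_cases hz : z = 0
          · subst hz; rw [hmu0, hmu0, hki]
          · have := congrFun hnu z
            simpa [Function.update_of_ne hz] using this
        have hupd : Function.update x.1 0 kstar = Function.update y.1 0 kstar := by
          rw [hinv x.1, hinv y.1, hmu]
        exact assemble (update_cancel hupd hk0) hk
      rcases Nat.lt_or_ge p (2 * s + 3) with hp2 | hp2
      · -- middle regime
        obtain ⟨q, rfl⟩ : ∃ q, p = s + 2 + q := ⟨p - s - 2, by omega⟩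
        have hq : q ≤ s := by omega
        rw [state_mid x.1 (i : ℕ) x.2.2 kstar q hq,
          state_mid y.1 (i : ℕ) y.2.2 kstar q hq] at hstate
        exact recover (foldl_applyT_injective ((swapSeq0 (i : ℕ)).take q) hstate)
      · -- last state
        have hp3 : p = 2 * s + 3 := by omega
        subst hp3
        rw [state_last x.1 (i : ℕ) x.2.2 kstar, state_last y.1 (i : ℕ) y.2.2 kstar] at hstate
        have hchi0 : ∀ (lam : Fin (L + 1) → Fin m) (k : Fin m),
            (List.foldl applyT
              (Function.update
                (List.foldl applyT (Function.update lam 0 kstar) (swapSeq0 (i : ℕ))) 0 k)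
              (swapSeq0 (i : ℕ))) 0 = kstar := by
          intro lam k
          rw [hfull]
          simp only [Function.comp_apply]
          rw [Equiv.swap_apply_left, Function.update_of_ne hi_ne, hfull,
            Function.comp_apply, Equiv.swap_apply_right]
          simp
        have hchi : List.foldl applyT
            (Function.update
              (List.foldl applyT (Function.update x.1 0 kstar) (swapSeq0 (i : ℕ))) 0 x.2.2)
            (swapSeq0 (i : ℕ)) =
            List.foldl applyT
            (Function.update
              (List.foldl applyT (Function.update y.1 0 kstar) (swapSeq0 (i : ℕ))) 0 y.2.2)
            (swapSeq0 (i : ℕ)) := by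
          funext z
          by_cases hz : z = 0
          · subst hz; rw [hchi0, hchi0]
          · have := congrFun hstate z
            simpa [Function.update_of_ne hz] using this
        exact recover (foldl_applyT_injective (swapSeq0 (i : ℕ)) hchi)
end

lemma swapSeq0_length_le (i L : ℕ) (hi : i ≤ L) :
    (swapSeq0 i).length ≤ 3 ^ Nat.clog 2 L := by
  unfold swapSeq0
  split_ifs with h
  · simp
  · calc (swapSeq 0 i).length ≤ 3 ^ Nat.clog 2 (i - 0) :=
        swapSeq_length_le 0 i (Nat.pos_of_ne_zero h)
      _ ≤ 3 ^ Nat.clog 2 L := by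
        apply Nat.pow_le_pow_right (by norm_num)
        exact Nat.clog_mono_right _ (by omega)

lemma card_filter_le (L m : ℕ) (kstar : Fin m) (τ τ' : Fin (L + 1) → Fin m) :
    (Finset.univ.filter
        (fun x : (Fin (L + 1) → Fin m) × Fin (L + 1) × Fin m =>
          τ ≠ τ' ∧ (τ, τ') ∈ (gammaPath x.1 (x.2.1 : ℕ) x.2.2 kstar).zip
            (gammaPath x.1 (x.2.1 : ℕ) x.2.2 kstar).tail)).card ≤
      (L + 1) * (2 * 3 ^ Nat.clog 2 L + 3) * m ^ 2 := by
  classical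
  set N := 2 * 3 ^ Nat.clog 2 L + 3 with hN
  have hsub : (Finset.univ.filter
      (fun x : (Fin (L + 1) → Fin m) × Fin (L + 1) × Fin m =>
        τ ≠ τ' ∧ (τ, τ') ∈ (gammaPath x.1 (x.2.1 : ℕ) x.2.2 kstar).zip
          (gammaPath x.1 (x.2.1 : ℕ) x.2.2 kstar).tail)) ⊆
      (Finset.univ ×ˢ Finset.range N).biUnion
        (fun ip : Fin (L + 1) × ℕ => Finset.univ.filter
          (fun x : (Fin (L + 1) → Fin m) × Fin (L + 1) × Fin m =>
            x.2.1 = ip.1 ∧ (gammaPath x.1 (ip.1 : ℕ) x.2.2 kstar)[ip.2]? = some τ)) := by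
    intro x hx
    simp only [Finset.mem_filter, Finset.mem_univ, true_and] at hx
    obtain ⟨-, hmem⟩ := hx
    obtain ⟨n, hn, hval⟩ := List.mem_iff_getElem.mp hmem
    rw [List.getElem_zip] at hval
    have hval1 : (gammaPath x.1 (x.2.1 : ℕ) x.2.2 kstar)[n]'(by
        rw [List.length_zip] at hn; omega) = τ := by
      have := congrArg Prod.fst hval
      simpa using this
    have hlen : (gammaPath x.1 (x.2.1 : ℕ) x.2.2 kstar).length =
        2 * (swapSeq0 (x.2.1 : ℕ)).length + 3 + 1 := by
      rw [gammaPath_eq, List.length_scanl, length_mvList]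
    have hnN : n < N := by
      rw [List.length_zip, List.length_tail, hlen] at hn
      have hsb : (swapSeq0 (x.2.1 : ℕ)).length ≤ 3 ^ Nat.clog 2 L :=
        swapSeq0_length_le _ L (by omega)
      omega
    apply Finset.mem_biUnion.mpr
    refine ⟨(x.2.1, n), by simp [Finset.mem_product, hnN], ?_⟩
    refine Finset.mem_filter.mpr ⟨Finset.mem_univ _, rfl, ?_⟩
    rw [List.getElem?_eq_getElem (show n <
      (gammaPath x.1 ((x.2.1 : Fin (L + 1)) : ℕ) x.2.2 kstar).length by
        rw [List.length_zip, List.length_tail] at hn; omega)]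
    exact congrArg some hval1
  calc (Finset.univ.filter _).card ≤ _ := Finset.card_le_card hsub
    _ ≤ ∑ ip ∈ Finset.univ ×ˢ Finset.range N, (Finset.univ.filter
          (fun x : (Fin (L + 1) → Fin m) × Fin (L + 1) × Fin m =>
            x.2.1 = ip.1 ∧ (gammaPath x.1 (ip.1 : ℕ) x.2.2 kstar)[ip.2]? =
              some τ)).card := Finset.card_biUnion_le
    _ ≤ ∑ _ip ∈ Finset.univ ×ˢ Finset.range N, m ^ 2 := by
        apply Finset.sum_le_sum
        intro ip _
        exact fiber_bound kstar τ ip.1 ip.2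
    _ = (L + 1) * N * m ^ 2 := by
        rw [Finset.sum_const, Finset.card_product, Finset.card_univ, Finset.card_range]
        simp [Fintype.card_fin, mul_assoc]

lemma rpow_logb_comm' {x y : ℝ} (hx : 0 < x) (hy : 0 < y) :
    x ^ Real.logb 2 y = y ^ Real.logb 2 x := by
  rw [Real.rpow_def_of_pos hx, Real.rpow_def_of_pos hy, Real.logb, Real.logb]
  ring_nf

lemma three_pow_clog_le (L : ℕ) (hL : 1 ≤ L) :
    ((3 : ℝ)) ^ (Nat.clog 2 L) ≤ 3 * ((L : ℝ) + 1) ^ Real.logb 2 3 := by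
  have hb : (0 : ℝ) < (L : ℝ) + 1 := by positivity
  have hone : (1 : ℝ) ≤ ((L : ℝ) + 1) ^ Real.logb 2 3 :=
    Real.one_le_rpow (by have := Nat.cast_nonneg (α := ℝ) L; linarith)
      (Real.logb_nonneg (by norm_num) (by norm_num))
  rcases Nat.eq_zero_or_pos (Nat.clog 2 L) with h0 | hpos
  · rw [h0, pow_zero]; linarith
  · have hL2 : 1 < L := by
      by_contra hcon
      have hL1 : L = 1 := by omega
      rw [hL1] at hpos
      simp [Nat.clog_one_right] at hpos
    have hlt : 2 ^ (Nat.clog 2 L - 1) < L := by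
      have := Nat.pow_pred_clog_lt_self (b := 2) (by norm_num) hL2
      simpa [Nat.pred_eq_sub_one] using this
    have hcast : (2 : ℝ) ^ ((Nat.clog 2 L - 1 : ℕ) : ℝ) ≤ (L : ℝ) + 1 := by
      rw [Real.rpow_natCast]
      have h1 : ((2 ^ (Nat.clog 2 L - 1) : ℕ) : ℝ) ≤ (L : ℝ) := by exact_mod_cast hlt.le
      push_cast at h1
      linarith
    have hlog : ((Nat.clog 2 L - 1 : ℕ) : ℝ) ≤ Real.logb 2 ((L : ℝ) + 1) :=
      (Real.le_logb_iff_rpow_le (by norm_num) hb).mpr hcast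
    have hc1 : Nat.clog 2 L - 1 + 1 = Nat.clog 2 L := by omega
    have e1 : (3 : ℝ) ^ (Nat.clog 2 L) = 3 * (3 : ℝ) ^ (Nat.clog 2 L - 1) := by
      conv_lhs => rw [← hc1]
      rw [pow_succ']
    rw [e1]
    have h1 : (3 : ℝ) ^ (Nat.clog 2 L - 1) ≤ ((L : ℝ) + 1) ^ Real.logb 2 3 := by
      calc (3 : ℝ) ^ (Nat.clog 2 L - 1) = (3 : ℝ) ^ ((Nat.clog 2 L - 1 : ℕ) : ℝ) :=
            (Real.rpow_natCast 3 _).symm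
        _ ≤ (3 : ℝ) ^ Real.logb 2 ((L : ℝ) + 1) :=
            (Real.rpow_le_rpow_left_iff (by norm_num)).mpr hlog
        _ = ((L : ℝ) + 1) ^ Real.logb 2 3 := rpow_logb_comm' (by norm_num) hb
    linarith


/-- there is an absolute constant `C > 0` such that for all `L ≥ 1`, `m ≥ 1`,
`k* ∈ {1,…,m}` and every ordered pair `(τ, τ̃)` of states, the number of triples `(λ, i, k)`
such that `(τ, τ̃)` occurs as a consecutive pair of distinct states on the path `γ_{λ,i,k}`
is at most `C m² (L+1)^{1 + log₂ 3}`. -/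
theorem stmt_6 : ∃ C : ℝ, 0 < C ∧
    ∀ (L m : ℕ), 1 ≤ L → 1 ≤ m → ∀ kstar : Fin m,
    ∀ τ τ' : Fin (L + 1) → Fin m,
      ((Finset.univ.filter
          (fun x : (Fin (L + 1) → Fin m) × Fin (L + 1) × Fin m =>
            τ ≠ τ' ∧ (τ, τ') ∈ (gammaPath x.1 (x.2.1 : ℕ) x.2.2 kstar).zip
              (gammaPath x.1 (x.2.1 : ℕ) x.2.2 kstar).tail)).card : ℝ) ≤
        C * (m : ℝ) ^ 2 * ((L : ℝ) + 1) ^ (1 + Real.logb 2 3) := by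
  refine ⟨9, by norm_num, ?_⟩
  intro L m hL hm kstar τ τ'
  have hcount := card_filter_le L m kstar τ τ'
  have hcast : ((Finset.univ.filter
      (fun x : (Fin (L + 1) → Fin m) × Fin (L + 1) × Fin m =>
        τ ≠ τ' ∧ (τ, τ') ∈ (gammaPath x.1 (x.2.1 : ℕ) x.2.2 kstar).zip
          (gammaPath x.1 (x.2.1 : ℕ) x.2.2 kstar).tail)).card : ℝ) ≤
      ((L : ℝ) + 1) * (2 * (3 : ℝ) ^ Nat.clog 2 L + 3) * (m : ℝ) ^ 2 := by
    have h2 : ((L : ℝ) + 1) * (2 * (3 : ℝ) ^ Nat.clog 2 L + 3) * (m : ℝ) ^ 2 =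
        (((L + 1) * (2 * 3 ^ Nat.clog 2 L + 3) * m ^ 2 : ℕ) : ℝ) := by
      push_cast
      ring
    rw [h2]
    exact_mod_cast hcount
  have hb : (0 : ℝ) < (L : ℝ) + 1 := by positivity
  have hone : (1 : ℝ) ≤ ((L : ℝ) + 1) ^ Real.logb 2 3 :=
    Real.one_le_rpow (by have := Nat.cast_nonneg (α := ℝ) L; linarith)
      (Real.logb_nonneg (by norm_num) (by norm_num))
  have h3 := three_pow_clog_le L hL
  have hN : 2 * (3 : ℝ) ^ Nat.clog 2 L + 3 ≤ 9 * ((L : ℝ) + 1) ^ Real.logb 2 3 := by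
    linarith
  have hsplit : ((L : ℝ) + 1) ^ (1 + Real.logb 2 3) =
      ((L : ℝ) + 1) * ((L : ℝ) + 1) ^ Real.logb 2 3 := by
    rw [Real.rpow_add hb, Real.rpow_one]
  rw [hsplit]
  calc ((Finset.univ.filter _).card : ℝ) ≤
      ((L : ℝ) + 1) * (2 * (3 : ℝ) ^ Nat.clog 2 L + 3) * (m : ℝ) ^ 2 := hcast
    _ ≤ ((L : ℝ) + 1) * (9 * ((L : ℝ) + 1) ^ Real.logb 2 3) * (m : ℝ) ^ 2 := by
        apply mul_le_mul_of_nonneg_right _ (by positivity)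
        exact mul_le_mul_of_nonneg_left hN (by positivity)
    _ = 9 * (m : ℝ) ^ 2 * (((L : ℝ) + 1) * ((L : ℝ) + 1) ^ Real.logb 2 3) := by ring
end

section
/- Let L ≥ 4 be an integer and let p, w, S and W be as in the explicit parallel-tempering construction and its permutation identification. Then Σ_{σ ∈ S} w(σ) / W > 1/(2e). -/
open scoped Classical

/-- The unnormalized weight `N(i,k) = γ^(2(i+1)k − k² + 1) + Σ_{r=0}^{L} γ^((2r+1)(i+1) − r² − r)`
with `γ = (L+1)³`, of the explicit parallel-tempering construction. -/
noncomputable def NPT (L i k : ℕ) : ℝ :=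
  (((L : ℝ) + 1) ^ 3) ^ (2 * ((i : ℤ) + 1) * (k : ℤ) - (k : ℤ) ^ 2 + 1) +
    ∑ r ∈ Finset.range (L + 1),
      (((L : ℝ) + 1) ^ 3) ^ ((2 * (r : ℤ) + 1) * ((i : ℤ) + 1) - (r : ℤ) ^ 2 - (r : ℤ))

/-- `p(i,k) = N(i,k) / Σ_{h=1}^{m} N(i,h)` with `m = L+1`: the probability vector of the
explicit parallel-tempering construction. -/
noncomputable def pPT (L i k : ℕ) : ℝ := NPT L i k / ∑ h ∈ Finset.Icc 1 (L + 1), NPT L i h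

-- basic facts
lemma gamPos (L : ℕ) : (0:ℝ) < ((L : ℝ) + 1) ^ 3 := by positivity

lemma gamOne (L : ℕ) : (1:ℝ) ≤ ((L : ℝ) + 1) ^ 3 := by
  have h : (1:ℝ) ≤ (L:ℝ) + 1 := by
    have := Nat.cast_nonneg (α := ℝ) L
    linarith
  calc (1:ℝ) = 1^3 := by norm_num
    _ ≤ ((L:ℝ)+1)^3 := by gcongr

lemma NPT_pos (L i k : ℕ) : 0 < NPT L i k := by
  unfold NPT
  have h1 : (0:ℝ) < (((L : ℝ) + 1) ^ 3) ^ (2 * ((i : ℤ) + 1) * (k : ℤ) - (k : ℤ) ^ 2 + 1) :=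
    zpow_pos (gamPos L) _
  have h2 : (0:ℝ) ≤ ∑ r ∈ Finset.range (L + 1),
      (((L : ℝ) + 1) ^ 3) ^ ((2 * (r : ℤ) + 1) * ((i : ℤ) + 1) - (r : ℤ) ^ 2 - (r : ℤ)) :=
    Finset.sum_nonneg fun r _ => le_of_lt (zpow_pos (gamPos L) _)
  linarith

lemma DPT_pos (L i : ℕ) : 0 < ∑ h ∈ Finset.Icc 1 (L + 1), NPT L i h :=
  Finset.sum_pos (fun h _ => NPT_pos L i h) ⟨1, by simp⟩

lemma pPT_pos (L i k : ℕ) : 0 < pPT L i k := div_pos (NPT_pos L i k) (DPT_pos L i)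

lemma pPT_sum (L i : ℕ) : ∑ k : Fin (L+1), pPT L i ((k:ℕ)+1) = 1 := by
  rw [Fin.sum_univ_eq_sum_range (fun k => pPT L i (k+1))]
  unfold pPT
  rw [← Finset.sum_div]
  rw [div_eq_one_iff_eq (ne_of_gt (DPT_pos L i))]
  rw [← Finset.Ico_add_one_right_eq_Icc, Finset.sum_Ico_eq_sum_range]
  simp [Nat.add_comm]

-- second summand bound
lemma CPT_le (L i : ℕ) :
    ∑ r ∈ Finset.range (L + 1),
      (((L : ℝ) + 1) ^ 3) ^ ((2 * (r : ℤ) + 1) * ((i : ℤ) + 1) - (r : ℤ) ^ 2 - (r : ℤ))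
      ≤ ((L:ℝ)+1) * (((L : ℝ) + 1) ^ 3) ^ (((i : ℤ) + 1)^2) := by
  have key : ∀ r ∈ Finset.range (L+1),
      (((L : ℝ) + 1) ^ 3) ^ ((2 * (r : ℤ) + 1) * ((i : ℤ) + 1) - (r : ℤ) ^ 2 - (r : ℤ))
      ≤ (((L : ℝ) + 1) ^ 3) ^ (((i : ℤ) + 1)^2) := by
    intro r _
    apply zpow_le_zpow_right₀ (gamOne L)
    have h : (0:ℤ) ≤ ((i:ℤ)+1-r) * ((i:ℤ)+1-r-1) := by
      rcases le_or_gt ((i:ℤ)+1-r) 0 with h | h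
      · nlinarith
      · exact mul_nonneg (by linarith) (by linarith)
    nlinarith [h]
  calc ∑ r ∈ Finset.range (L + 1),
      (((L : ℝ) + 1) ^ 3) ^ ((2 * (r : ℤ) + 1) * ((i : ℤ) + 1) - (r : ℤ) ^ 2 - (r : ℤ))
      ≤ ∑ _r ∈ Finset.range (L + 1), (((L : ℝ) + 1) ^ 3) ^ (((i : ℤ) + 1)^2) :=
        Finset.sum_le_sum key
    _ = ((L:ℝ)+1) * (((L : ℝ) + 1) ^ 3) ^ (((i : ℤ) + 1)^2) := by
        rw [Finset.sum_const, Finset.card_range]; push_cast; ring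

lemma NPT_le (L i h : ℕ) (hne : h ≠ i + 1) :
    NPT L i h ≤ ((L:ℝ)+2) * (((L : ℝ) + 1) ^ 3) ^ (((i : ℤ) + 1)^2) := by
  have h1 : (((L : ℝ) + 1) ^ 3) ^ (2 * ((i : ℤ) + 1) * (h : ℤ) - (h : ℤ) ^ 2 + 1)
      ≤ (((L : ℝ) + 1) ^ 3) ^ (((i : ℤ) + 1)^2) := by
    apply zpow_le_zpow_right₀ (gamOne L)
    have hz : ((h:ℤ) - ((i:ℤ)+1)) ≠ 0 := by
      intro hc
      apply hne
      omega
    have h2 : 1 ≤ ((h:ℤ) - ((i:ℤ)+1))^2 := by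
      rcases lt_or_gt_of_ne hz with h | h
      · nlinarith
      · nlinarith
    nlinarith
  have := CPT_le L i
  unfold NPT
  nlinarith [this, h1]

lemma NPT_ge (L i : ℕ) :
    (((L : ℝ) + 1) ^ 3) ^ ((((i : ℤ) + 1)^2) + 1) ≤ NPT L i (i + 1) := by
  unfold NPT
  have h2 : (0:ℝ) ≤ ∑ r ∈ Finset.range (L + 1),
      (((L : ℝ) + 1) ^ 3) ^ ((2 * (r : ℤ) + 1) * ((i : ℤ) + 1) - (r : ℤ) ^ 2 - (r : ℤ)) :=
    Finset.sum_nonneg fun r _ => le_of_lt (zpow_pos (gamPos L) _)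
  have he : 2 * ((i : ℤ) + 1) * ((i + 1 : ℕ) : ℤ) - ((i + 1 : ℕ) : ℤ) ^ 2 + 1
      = (((i : ℤ) + 1)^2) + 1 := by push_cast; ring
  rw [he] at *
  linarith

lemma pPT_ge (L i : ℕ) (hi : i ≤ L) :
    ((L:ℝ)+1)/((L:ℝ)+2) ≤ pPT L i (i+1) := by
  set γE : ℝ := (((L : ℝ) + 1) ^ 3) ^ (((i : ℤ) + 1)^2) with hγE
  have hγEpos : 0 < γE := zpow_pos (gamPos L) _
  have hmem : i + 1 ∈ Finset.Icc 1 (L+1) := by simp; omega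
  have hD : ∑ h ∈ Finset.Icc 1 (L + 1), NPT L i h
      = (∑ h ∈ (Finset.Icc 1 (L+1)).erase (i+1), NPT L i h) + NPT L i (i+1) :=
    (Finset.sum_erase_add _ _ hmem).symm
  have hR : ∑ h ∈ (Finset.Icc 1 (L+1)).erase (i+1), NPT L i h
      ≤ (L:ℝ) * (((L:ℝ)+2) * γE) := by
    calc ∑ h ∈ (Finset.Icc 1 (L+1)).erase (i+1), NPT L i h
        ≤ ∑ _h ∈ (Finset.Icc 1 (L+1)).erase (i+1), ((L:ℝ)+2) * γE :=
          Finset.sum_le_sum fun h hh => NPT_le L i h (Finset.ne_of_mem_erase hh)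
      _ = (L:ℝ) * (((L:ℝ)+2) * γE) := by
          rw [Finset.sum_const, Finset.card_erase_of_mem hmem, Nat.card_Icc]
          simp
  have hN : (((L:ℝ)+1)^3) * γE ≤ NPT L i (i+1) := by
    have := NPT_ge L i
    rwa [zpow_add_one₀ (ne_of_gt (gamPos L)), mul_comm] at this
  have hNpos := NPT_pos L i (i+1)
  have hDpos := DPT_pos L i
  unfold pPT
  rw [div_le_div_iff₀ (by positivity) hDpos, hD]
  have hL0 : (0:ℝ) ≤ (L:ℝ) := Nat.cast_nonneg L
  nlinarith [hR, hN, hγEpos, hL0]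


/-- The weight `w(σ) = Π_{i=0}^{L} p(i, σ(i)+1)` of a permutation `σ` of `{0,…,L}`
(states of the projected chain are identified with permutations). -/
noncomputable def wPT (L : ℕ) (σ : Equiv.Perm (Fin (L + 1))) : ℝ :=
  ∏ i : Fin (L + 1), pPT L (i : ℕ) ((σ i : ℕ) + 1)

/-- `W = Σ_σ w(σ)`, the total weight over all permutations of `{0,…,L}`. -/
noncomputable def WPT (L : ℕ) : ℝ := ∑ σ : Equiv.Perm (Fin (L + 1)), wPT L σ

/-- `σ' = s_j(σ)` for some adjacent swap `s_j`, `j ∈ {1,…,L}`: `σ'` is obtained from `σ` by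
exchanging the values at two adjacent positions `a` and `a+1`. -/
def adjStep {L : ℕ} (σ σ' : Equiv.Perm (Fin (L + 1))) : Prop :=
  ∃ a b : Fin (L + 1), (b : ℕ) = (a : ℕ) + 1 ∧ σ' = σ * Equiv.swap a b

/-- The set `S` of permutations reachable from the identity by adjacent swaps so that every
intermediate permutation has at most `⌊log₂ L⌋ − 1` non-fixed points. -/
def SPT (L : ℕ) : Set (Equiv.Perm (Fin (L + 1))) :=
  {σ | ∃ (T : ℕ) (f : ℕ → Equiv.Perm (Fin (L + 1))), f 0 = 1 ∧ f T = σ ∧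
    (∀ t < T, adjStep (f t) (f (t + 1))) ∧
    ∀ t ≤ T, ((Finset.univ.filter fun i => f t i ≠ i).card : ℤ) ≤ ⌊Real.logb 2 (L : ℝ)⌋ - 1}

lemma wPT_pos (L : ℕ) (σ : Equiv.Perm (Fin (L+1))) : 0 < wPT L σ :=
  Finset.prod_pos fun i _ => pPT_pos L _ _

lemma WPT_le_one (L : ℕ) : WPT L ≤ 1 := by
  have h1 : WPT L = ∑ f ∈ Finset.univ.image (fun σ : Equiv.Perm (Fin (L+1)) => ⇑σ),
      ∏ i : Fin (L+1), pPT L (i : ℕ) ((f i : ℕ) + 1) := by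
    rw [Finset.sum_image (fun a _ b _ h => Equiv.coe_fn_injective h)]
    rfl
  have h2 : ∑ f ∈ Finset.univ.image (fun σ : Equiv.Perm (Fin (L+1)) => ⇑σ),
      ∏ i : Fin (L+1), pPT L (i : ℕ) ((f i : ℕ) + 1)
      ≤ ∑ f : Fin (L+1) → Fin (L+1), ∏ i : Fin (L+1), pPT L (i : ℕ) ((f i : ℕ) + 1) :=
    Finset.sum_le_sum_of_subset_of_nonneg (Finset.subset_univ _)
      (fun f _ _ => Finset.prod_nonneg fun i _ => le_of_lt (pPT_pos L _ _))
  have h3 : ∑ f : Fin (L+1) → Fin (L+1), ∏ i : Fin (L+1), pPT L (i : ℕ) ((f i : ℕ) + 1)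
      = ∏ i : Fin (L+1), ∑ k : Fin (L+1), pPT L (i : ℕ) ((k : ℕ) + 1) := by
    rw [Finset.prod_univ_sum]
    rw [← Fintype.piFinset_univ]
  have h4 : ∏ i : Fin (L+1), ∑ k : Fin (L+1), pPT L (i : ℕ) ((k : ℕ) + 1) = 1 := by
    apply Finset.prod_eq_one
    intro i _
    exact pPT_sum L i
  rw [h1]
  rw [h3, h4] at h2
  exact h2

lemma one_mem_SPT (L : ℕ) (hL : 4 ≤ L) : (1 : Equiv.Perm (Fin (L+1))) ∈ SPT L := by
  refine ⟨0, fun _ => 1, rfl, rfl, fun t ht => absurd ht (Nat.not_lt_zero t), ?_⟩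
  intro t _
  have hfilter : (Finset.univ.filter fun i : Fin (L+1) => (1 : Equiv.Perm (Fin (L+1))) i ≠ i)
      = ∅ := by
    apply Finset.filter_false_of_mem
    intro i _
    simp
  rw [hfilter]
  simp only [Finset.card_empty, Nat.cast_zero]
  have hlog : (1:ℝ) ≤ Real.logb 2 (L : ℝ) := by
    rw [Real.le_logb_iff_rpow_le (by norm_num) (by positivity)]
    rw [Real.rpow_one]
    exact_mod_cast by omega
  have := Int.le_floor.mpr (by exact_mod_cast hlog : ((1:ℤ):ℝ) ≤ Real.logb 2 (L:ℝ))
  omega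

lemma wPT_one_ge (L : ℕ) : (((L:ℝ)+1)/((L:ℝ)+2))^(L+1) ≤ wPT L 1 := by
  unfold wPT
  have hc : (0:ℝ) ≤ ((L:ℝ)+1)/((L:ℝ)+2) := by positivity
  calc (((L:ℝ)+1)/((L:ℝ)+2))^(L+1)
      = ∏ _i : Fin (L+1), ((L:ℝ)+1)/((L:ℝ)+2) := by
        rw [Finset.prod_const, Finset.card_univ, Fintype.card_fin]
    _ ≤ ∏ i : Fin (L+1), pPT L (i : ℕ) (((1 : Equiv.Perm (Fin (L+1))) i : ℕ) + 1) := by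
        apply Finset.prod_le_prod (fun i _ => hc)
        intro i _
        simpa using pPT_ge L (i : ℕ) (Nat.lt_succ_iff.mp i.isLt)

lemma exp_le_pow (L : ℕ) : Real.exp (-1) ≤ (((L:ℝ)+1)/((L:ℝ)+2))^(L+1) := by
  set n : ℕ := L + 1 with hn
  have hnpos : (0:ℝ) < n := by positivity
  have h1 : Real.exp (-(1/(n:ℝ))) ≤ ((L:ℝ)+1)/((L:ℝ)+2) := by
    have h2 := Real.add_one_le_exp (1/(n:ℝ))
    have h3 : ((L:ℝ)+2)/((L:ℝ)+1) ≤ Real.exp (1/(n:ℝ)) := by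
      have he : ((L:ℝ)+2)/((L:ℝ)+1) = 1/(n:ℝ) + 1 := by
        rw [hn]; push_cast; field_simp; ring
      rw [he]; exact h2
    have hpos : (0:ℝ) < ((L:ℝ)+2)/((L:ℝ)+1) := by positivity
    have h4 : 1/Real.exp (1/(n:ℝ)) ≤ 1/(((L:ℝ)+2)/((L:ℝ)+1)) :=
      one_div_le_one_div_of_le hpos h3
    rw [one_div_div] at h4
    rw [Real.exp_neg, ← one_div]
    exact h4
  calc Real.exp (-1) = (Real.exp (-(1/(n:ℝ))))^n := by
        rw [← Real.exp_nat_mul]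
        congr 1
        field_simp
    _ ≤ (((L:ℝ)+1)/((L:ℝ)+2))^n :=
        pow_le_pow_left₀ (le_of_lt (Real.exp_pos _)) h1 n


/-- `Σ_{σ ∈ S} w(σ) / W > 1/(2e)`. -/
theorem stmt_13 (L : ℕ) (hL : 4 ≤ L) :
    (∑ σ ∈ Finset.univ.filter (fun σ => σ ∈ SPT L), wPT L σ) / WPT L >
      1 / (2 * Real.exp 1) := by
  set Ssum := ∑ σ ∈ Finset.univ.filter (fun σ => σ ∈ SPT L), wPT L σ with hS
  have hid : (1 : Equiv.Perm (Fin (L+1))) ∈ Finset.univ.filter (fun σ => σ ∈ SPT L) := by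
    simp [one_mem_SPT L hL]
  have hS1 : wPT L 1 ≤ Ssum :=
    Finset.single_le_sum (fun σ _ => le_of_lt (wPT_pos L σ)) hid
  have hW1 : wPT L 1 ≤ WPT L :=
    Finset.single_le_sum (fun σ _ => le_of_lt (wPT_pos L σ)) (Finset.mem_univ 1)
  have hWpos : 0 < WPT L := lt_of_lt_of_le (wPT_pos L 1) hW1
  have hSnn : 0 ≤ Ssum := le_trans (le_of_lt (wPT_pos L 1)) hS1
  have hdiv : Ssum ≤ Ssum / WPT L := by
    rw [le_div_iff₀ hWpos]
    exact mul_le_of_le_one_right hSnn (WPT_le_one L)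
  have hlow : Real.exp (-1) ≤ Ssum :=
    le_trans (exp_le_pow L) (le_trans (wPT_one_ge L) hS1)
  have hfin : 1 / (2 * Real.exp 1) < Real.exp (-1) := by
    rw [Real.exp_neg, ← one_div]
    apply one_div_lt_one_div_of_lt (Real.exp_pos 1)
    nlinarith [Real.exp_pos 1]
  calc 1 / (2 * Real.exp 1) < Real.exp (-1) := hfin
    _ ≤ Ssum := hlow
    _ ≤ Ssum / WPT L := hdiv
end
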